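/- Define R_n(x) by R_0(x) = R_1(x) = 1 and R_{n+2}(x) = x(nx+2) R_{n+1}(x) + x(1-x²) R_{n+1}'(x) (the alternating run polynomials). Then for n ≥ 1, R_{n+1}(x) = (-1)^{n-1}(x-1)(1-x²)^{⌊(n-1)/2⌋} + (1+x) Σ_{r=2}^{n+1} C(n, r-2) (-1)^{n-r+1} (1-x²)^{⌊(n-r+1)/2⌋} R_{r-1}(x). -/

import Mathlib

open Polynomial

noncomputable def dd (k : ℕ) : Polynomial ℝ := (-1) ^ k * (1 - X ^ 2) ^ (k / 2)

lemma dd_zero : dd 0 = 1 := by simp [dd]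
lemma dd_one : dd 1 = -1 := by simp [dd]

lemma dd_add_two (k : ℕ) : dd (k + 2) = (1 - X ^ 2) * dd k := by
  have h : (k + 2) / 2 = k / 2 + 1 := by omega
  simp only [dd, h, pow_succ, pow_add]
  ring

lemma dd_key (k : ℕ) :
    (X + (k : Polynomial ℝ) * X ^ 2) * dd k + X * (1 - X ^ 2) * derivative (dd k)
      = dd (k + 1) + (1 + X) * dd k := by
  induction k using Nat.twoStepInduction with
  | zero => simp [dd_zero, dd_one]
  | one =>
      have h2 : dd 2 = (1 - X ^ 2) * dd 0 := dd_add_two 0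
      simp only [dd_one, h2, dd_zero, Nat.cast_one, map_neg, derivative_one, neg_zero,
        mul_zero, mul_one, add_zero]
      ring
  | more k ih _ =>
      have h2 : dd (k + 2) = (1 - X ^ 2) * dd k := dd_add_two k
      have h3 : dd (k + 3) = (1 - X ^ 2) * dd (k + 1) := dd_add_two (k + 1)
      have hd : derivative ((1 : Polynomial ℝ) - X ^ 2) = -(2 * X) := by
        simp [derivative_X_pow, map_ofNat, one_add_one_eq_two]
      rw [h2, h3, derivative_mul, hd]
      push_cast
      linear_combination (1 - X ^ 2) * ih

lemma pascal_aux (f : ℕ → Polynomial ℝ) (n : ℕ) :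
    ∑ m ∈ Finset.range (n + 1), ((n + 1).choose m : Polynomial ℝ) * f m
      = (∑ m ∈ Finset.range n, (n.choose m : Polynomial ℝ) * f m) + f n
        + ∑ m ∈ Finset.range n, (n.choose m : Polynomial ℝ) * f (m + 1) := by
  rw [Finset.sum_range_succ' _ n]
  simp only [Nat.choose_succ_succ, Nat.cast_add, add_mul, Nat.choose_zero_right, Nat.cast_one,
    one_mul]
  rw [Finset.sum_add_distrib]
  have h2 : (∑ m ∈ Finset.range n, ((n.choose (m + 1) : Polynomial ℝ)) * f (m + 1))
      + (n.choose 0 : Polynomial ℝ) * f 0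
      = ∑ m ∈ Finset.range (n + 1), (n.choose m : Polynomial ℝ) * f m :=
    (Finset.sum_range_succ' (fun m => (n.choose m : Polynomial ℝ) * f m) n).symm
  rw [Finset.sum_range_succ] at h2
  simp only [Nat.choose_zero_right, Nat.cast_one, one_mul, Nat.choose_self] at h2
  linear_combination h2

lemma main_lemma (R : ℕ → Polynomial ℝ) (h0 : R 0 = 1) (h1 : R 1 = 1)
    (hrec : ∀ n : ℕ, R (n + 2) =
      X * ((n : Polynomial ℝ) * X + 2) * R (n + 1) + X * (1 - X ^ 2) * derivative (R (n + 1)))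
    (n : ℕ) (hn : 1 ≤ n) :
    R (n + 1) = (X - 1) * dd (n - 1) +
      (1 + X) * ∑ m ∈ Finset.range n,
        (n.choose m : Polynomial ℝ) * dd (n - 1 - m) * R (m + 1) := by
  have hsub : ∀ m : ℕ, X * (1 - X ^ 2) * derivative (R (m + 1))
      = R (m + 2) - X * ((m : Polynomial ℝ) * X + 2) * R (m + 1) := fun m => by
    rw [hrec m]; ring
  induction n, hn using Nat.le_induction with
  | base =>
      rw [show (1 : ℕ) + 1 = 0 + 2 from rfl, hrec 0, h1]
      simp [dd_zero, Finset.sum_range_one, h1]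
      ring
  | succ n hn ih =>
      simp only [Nat.add_sub_cancel]
      set S := ∑ m ∈ Finset.range n,
        (n.choose m : Polynomial ℝ) * dd (n - 1 - m) * R (m + 1) with hS
      set TD := ∑ m ∈ Finset.range n,
        ((n.choose m : Polynomial ℝ) * derivative (dd (n - 1 - m)) * R (m + 1)
          + (n.choose m : Polynomial ℝ) * dd (n - 1 - m) * derivative (R (m + 1))) with hTD
      have hdS : derivative S = TD := by
        rw [hS, hTD, derivative_sum]
        refine Finset.sum_congr rfl fun m hm => ?_
        simp only [derivative_mul, derivative_natCast]
        ring
      have hder : derivative ((X - 1) * dd (n - 1) + (1 + X) * S)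
          = dd (n - 1) + (X - 1) * derivative (dd (n - 1)) + S + (1 + X) * TD := by
        simp only [derivative_add, derivative_mul, derivative_sub, derivative_X, derivative_one,
          hdS]
        ring
      have hn1 : n - 1 + 1 = n := by omega
      have hcast : ((n - 1 : ℕ) : Polynomial ℝ) = (n : Polynomial ℝ) - 1 := by
        rw [Nat.cast_sub hn, Nat.cast_one]
      have hdk := dd_key (n - 1)
      rw [hn1, hcast] at hdk
      have sumeq : X * ((n : Polynomial ℝ) * X + 2) * ((1 + X) * S) + X * (1 - X ^ 2) * S
            + X * (1 - X ^ 2) * ((1 + X) * TD)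
          = (1 + X) * ((∑ m ∈ Finset.range n,
                (n.choose m : Polynomial ℝ) * dd (n - m) * R (m + 1))
              + (1 + X) * S
              + ∑ m ∈ Finset.range n,
                (n.choose m : Polynomial ℝ) * dd (n - 1 - m) * R (m + 2)) := by
        rw [hS, hTD]
        simp only [Finset.mul_sum, ← Finset.sum_add_distrib]
        refine Finset.sum_congr rfl fun m hm => ?_
        rw [Finset.mem_range] at hm
        have hk : n - m = (n - 1 - m) + 1 := by omega
        have hc : (n : Polynomial ℝ) = (m : Polynomial ℝ) + ((n - 1 - m : ℕ) : Polynomial ℝ) + 1 := by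
          have h' : n = m + (n - 1 - m) + 1 := by omega
          conv_lhs => rw [h']
          push_cast; ring
        rw [hk]
        linear_combination ((1 + X) * (n.choose m : Polynomial ℝ) * dd (n - 1 - m)) * hsub m
          + ((1 + X) * (n.choose m : Polynomial ℝ) * R (m + 1)) * dd_key (n - 1 - m)
          + ((1 + X) * (n.choose m : Polynomial ℝ) * dd (n - 1 - m) * R (m + 1) * X ^ 2) * hc
      have pascal : (∑ m ∈ Finset.range (n + 1),
            ((n + 1).choose m : Polynomial ℝ) * dd (n - m) * R (m + 1))
          = (∑ m ∈ Finset.range n, (n.choose m : Polynomial ℝ) * dd (n - m) * R (m + 1))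
            + R (n + 1)
            + ∑ m ∈ Finset.range n,
              (n.choose m : Polynomial ℝ) * dd (n - 1 - m) * R (m + 2) := by
        have h := pascal_aux (fun m => dd (n - m) * R (m + 1)) n
        have e1 : ∑ m ∈ Finset.range (n + 1),
            ((n + 1).choose m : Polynomial ℝ) * dd (n - m) * R (m + 1)
            = ∑ m ∈ Finset.range (n + 1),
              ((n + 1).choose m : Polynomial ℝ) * (dd (n - m) * R (m + 1)) :=
          Finset.sum_congr rfl fun m _ => by ring
        have e2 : ∑ m ∈ Finset.range n,
            (n.choose m : Polynomial ℝ) * (dd (n - m) * R (m + 1))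
            = ∑ m ∈ Finset.range n, (n.choose m : Polynomial ℝ) * dd (n - m) * R (m + 1) :=
          Finset.sum_congr rfl fun m _ => by ring
        have e3 : ∑ m ∈ Finset.range n,
            (n.choose m : Polynomial ℝ) * (dd (n - (m + 1)) * R (m + 1 + 1))
            = ∑ m ∈ Finset.range n,
              (n.choose m : Polynomial ℝ) * dd (n - 1 - m) * R (m + 2) :=
          Finset.sum_congr rfl fun m _ => by
            rw [show n - (m + 1) = n - 1 - m by omega]; ring
        have e4 : dd (n - n) * R (n + 1) = R (n + 1) := by
          rw [Nat.sub_self, dd_zero, one_mul]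
        rw [e1, h, e2, e3, e4]
      rw [show n + 1 + 1 = n + 2 from rfl, hrec n, ih]
      linear_combination (X * (1 - X ^ 2)) * hder + sumeq + (X - 1) * hdk
        - (1 + X) * pascal - (1 + X) * ih


/-- The alternating run polynomials, defined by `R 0 = R 1 = 1` and
`R_{n+2} = x(nx+2)R_{n+1} + x(1-x²)R_{n+1}'`, satisfy for `n ≥ 1`:
`R_{n+1}(x) = (-1)^{n-1}(x-1)(1-x²)^{⌊(n-1)/2⌋}
  + (1+x)·Σ_{r=2}^{n+1} C(n, r-2)(-1)^{n-r+1}(1-x²)^{⌊(n-r+1)/2⌋} R_{r-1}(x)`. -/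
theorem alternating_run_recurrence (R : ℕ → Polynomial ℝ) (h0 : R 0 = 1) (h1 : R 1 = 1)
    (hrec : ∀ n : ℕ, R (n + 2) =
      X * ((n : Polynomial ℝ) * X + 2) * R (n + 1) + X * (1 - X ^ 2) * derivative (R (n + 1)))
    (n : ℕ) (hn : 1 ≤ n) :
    R (n + 1) = (-1 : Polynomial ℝ) ^ (n - 1) * (X - 1) * (1 - X ^ 2) ^ ((n - 1) / 2) +
      (1 + X) * ∑ r ∈ Finset.Icc 2 (n + 1),
        (n.choose (r - 2) : Polynomial ℝ) * (-1 : Polynomial ℝ) ^ (n + 1 - r) *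
          (1 - X ^ 2) ^ ((n + 1 - r) / 2) * R (r - 1) := by
  have h := main_lemma R h0 h1 hrec n hn
  have e1 : (X - 1) * dd (n - 1)
      = (-1 : Polynomial ℝ) ^ (n - 1) * (X - 1) * (1 - X ^ 2) ^ ((n - 1) / 2) := by
    simp only [dd]; ring
  have e2 : ∑ r ∈ Finset.Icc 2 (n + 1), (n.choose (r - 2) : Polynomial ℝ) *
        (-1 : Polynomial ℝ) ^ (n + 1 - r) * (1 - X ^ 2) ^ ((n + 1 - r) / 2) * R (r - 1)
      = ∑ m ∈ Finset.range n, (n.choose m : Polynomial ℝ) * dd (n - 1 - m) * R (m + 1) := by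
    rw [← Finset.Ico_add_one_right_eq_Icc, Finset.sum_Ico_eq_sum_range]
    simp only [show n + 1 + 1 - 2 = n from by omega]
    refine Finset.sum_congr rfl fun m hm => ?_
    rw [Finset.mem_range] at hm
    rw [show 2 + m - 2 = m from by omega, show n + 1 - (2 + m) = n - 1 - m from by omega,
      show 2 + m - 1 = m + 1 from by omega]
    simp only [dd]; ring
  rw [h, e1, e2]
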